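/- Let α be irrational with continued fraction convergents l_k/q_k satisfying q_{k+1} ≥ e^{q_k} for all k ≥ 1. Set q_{−k} := −q_k, let (c_k)_{k ∈ ℤ∖{0}} be real numbers with cّ_{−k} = c_k and |c_k| ≤ C for all k, where C ≥ 1, and define h(x) = ∑_{k ≠ 0} c_k (1 − e(q_k α)) e(q_k x) (this series converges absolutely for every x). Then for every integer n ≥ 1, ∑_{j=0}^{n−1} h(jα) = ∑_{k ≠ 0} c_k (1 − e(n q_k α)), the right-hand series also being absolutely convergent. -/

import Mathlib

open Filter

/-- `e(x) = exp(2πix)`. -/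
noncomputable def e (x : ℝ) : ℂ := Complex.exp (2 * Real.pi * Complex.I * x)

/-- Gauss-map iterates of `α`, used to define the continued fraction expansion. -/
noncomputable def cfX (α : ℝ) : ℕ → ℝ
  | 0 => α
  | k + 1 => (Int.fract (cfX α k))⁻¹

/-- Partial quotients `a_k` of the continued fraction expansion of `α`. -/
noncomputable def cfA (α : ℝ) (k : ℕ) : ℤ := ⌊cfX α k⌋

/-- Denominators `q_k` of the continued fraction convergents of `α`:
`q₀ = 1`, `q₁ = a₁`, `q_k = a_k q_{k-1} + q_{k-2}`. -/
noncomputable def cfQ (α : ℝ) : ℕ → ℤ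
  | 0 => 1
  | 1 => cfA α 1
  | k + 2 => cfA α (k + 2) * cfQ α (k + 1) + cfQ α k

/-- Numerators `l_k` of the continued fraction convergents of `α`:
`l₀ = a₀`, `l₁ = a₀a₁ + 1`, `l_k = a_k l_{k-1} + l_{k-2}`. -/
noncomputable def cfL (α : ℝ) : ℕ → ℤ
  | 0 => cfA α 0
  | 1 => cfA α 0 * cfA α 1 + 1
  | k + 2 => cfA α (k + 2) * cfL α (k + 1) + cfL α k

/-- `q_k` extended to negative indices by `q_{-k} = -q_k`. -/
noncomputable def cfQZ (α : ℝ) (k : ℤ) : ℤ :=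
  if 0 ≤ k then cfQ α k.toNat else -cfQ α (-k).toNat

lemma e_add (x y : ℝ) : e (x + y) = e x * e y := by
  rw [e, e, e, ← Complex.exp_add]; push_cast; ring_nf

lemma e_zero : e 0 = 1 := by simp [e]

lemma e_int (m : ℤ) : e (m : ℝ) = 1 := by
  rw [e, show ((2:ℂ) * Real.pi * Complex.I * ((m:ℝ):ℂ)) = (m:ℂ) * (2 * Real.pi * Complex.I) by push_cast; ring]
  exact Complex.exp_int_mul_two_pi_mul_I m

lemma e_norm (x : ℝ) : ‖e x‖ = 1 := by
  rw [e, show ((2:ℂ) * Real.pi * Complex.I * (x:ℝ)) = ((2*Real.pi*x : ℝ):ℂ) * Complex.I by push_cast; ring]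
  exact Complex.norm_exp_ofReal_mul_I _

lemma e_pow (x : ℝ) (j : ℕ) : e ((j:ℝ) * x) = e x ^ j := by
  rw [e, e, ← Complex.exp_nat_mul]; congr 1; push_cast; ring

lemma norm_exp_I_sub_one (θ : ℝ) : ‖Complex.exp ((θ:ℂ) * Complex.I) - 1‖ ≤ |θ| := by
  have h1 : Complex.exp ((θ:ℂ) * Complex.I) - 1
      = Complex.exp (((θ/2:ℝ):ℂ) * Complex.I) * (2 * Complex.I * Complex.sin ((θ/2:ℝ):ℂ)) := by
    rw [Complex.sin, show ((θ:ℂ)) * Complex.I = ((θ/2:ℝ):ℂ) * Complex.I + ((θ/2:ℝ):ℂ) * Complex.I by push_cast; ring,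
      Complex.exp_add, show (-(((θ/2:ℝ):ℂ)) * Complex.I) = -(((θ/2:ℝ):ℂ) * Complex.I) by ring,
      Complex.exp_neg]
    have h := Complex.exp_ne_zero (((θ/2:ℝ):ℂ) * Complex.I)
    field_simp
    ring_nf
    simp [Complex.I_sq]
  rw [h1, norm_mul]
  have h2 : ‖Complex.exp (((θ/2:ℝ):ℂ) * Complex.I)‖ = 1 := Complex.norm_exp_ofReal_mul_I _
  rw [h2, one_mul]
  have h3 : Complex.sin ((θ/2:ℝ):ℂ) = ((Real.sin (θ/2) : ℝ) : ℂ) := (Complex.ofReal_sin _).symm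
  rw [h3]
  have h4 : ‖2 * Complex.I * ((Real.sin (θ/2):ℝ):ℂ)‖ = 2 * |Real.sin (θ/2)| := by
    rw [norm_mul, norm_mul, Complex.norm_real]
    simp
  rw [h4]
  have h5 := Real.abs_sin_le_abs (x := θ/2)
  rw [abs_div, abs_two] at h5
  linarith

lemma norm_one_sub_e (x : ℝ) : ‖1 - e x‖ ≤ 2 * Real.pi * |x| := by
  rw [norm_sub_rev, e, show ((2:ℂ) * Real.pi * Complex.I * (x:ℝ)) = ((2*Real.pi*x : ℝ):ℂ) * Complex.I by push_cast; ring]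
  calc ‖Complex.exp (((2*Real.pi*x : ℝ):ℂ) * Complex.I) - 1‖ ≤ |2*Real.pi*x| := norm_exp_I_sub_one _
    _ = 2 * Real.pi * |x| := by rw [abs_mul, abs_of_nonneg (by positivity : (0:ℝ) ≤ 2*Real.pi)]

lemma cfX_irrational {α : ℝ} (hα : Irrational α) : ∀ k, Irrational (cfX α k)
  | 0 => hα
  | k + 1 => by
    have h := cfX_irrational hα k
    have h2 : Irrational (Int.fract (cfX α k)) := by
      rw [Int.fract]; exact h.sub_intCast _
    exact h2.inv

lemma fract_cfX_pos {α : ℝ} (hα : Irrational α) (k : ℕ) : 0 < Int.fract (cfX α k) := by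
  rcases lt_or_eq_of_le (Int.fract_nonneg (cfX α k)) with h | h
  · exact h
  · exfalso
    have h2 : Irrational (Int.fract (cfX α k)) := by
      rw [Int.fract]; exact (cfX_irrational hα k).sub_intCast _
    exact h2.ne_zero h.symm

lemma cfX_gt_one {α : ℝ} (hα : Irrational α) (k : ℕ) (hk : 1 ≤ k) : 1 < cfX α k := by
  obtain ⟨m, rfl⟩ : ∃ m, k = m + 1 := ⟨k - 1, by omega⟩
  show 1 < (Int.fract (cfX α m))⁻¹
  rw [one_lt_inv_iff₀]
  exact ⟨fract_cfX_pos hα m, Int.fract_lt_one _⟩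

lemma cfA_ge_one {α : ℝ} (hα : Irrational α) (k : ℕ) (hk : 1 ≤ k) : 1 ≤ cfA α k := by
  rw [cfA, Int.le_floor]
  exact_mod_cast (cfX_gt_one hα k hk).le

lemma cfQ_ge_one {α : ℝ} (hα : Irrational α) : ∀ k, 1 ≤ cfQ α k
  | 0 => le_refl _
  | 1 => cfA_ge_one hα 1 le_rfl
  | (k + 2) => by
    have h1 := cfQ_ge_one hα (k + 1)
    have h2 := cfQ_ge_one hα k
    have h3 := cfA_ge_one hα (k + 2) (by omega)
    show 1 ≤ cfA α (k + 2) * cfQ α (k + 1) + cfQ α k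
    nlinarith

/-- product of fractional parts -/
noncomputable def cfP (α : ℝ) (k : ℕ) : ℝ := ∏ i ∈ Finset.range (k + 1), Int.fract (cfX α i)

lemma cfP_pos {α : ℝ} (hα : Irrational α) (k : ℕ) : 0 < cfP α k :=
  Finset.prod_pos fun i _ => fract_cfX_pos hα i

lemma cfP_succ (α : ℝ) (k : ℕ) : cfP α (k + 1) = cfP α k * Int.fract (cfX α (k + 1)) :=
  Finset.prod_range_succ _ _

lemma beta_eq {α : ℝ} (hα : Irrational α) :
    ∀ k, (cfQ α k : ℝ) * α - (cfL α k : ℝ) = (-1) ^ k * cfP α k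
  | 0 => by
    show ((1:ℤ) : ℝ) * α - ((⌊cfX α 0⌋ : ℤ) : ℝ) = (-1) ^ 0 * cfP α 0
    have hP : cfP α 0 = Int.fract (cfX α 0) := by rw [cfP, Finset.prod_range_one]
    rw [hP, Int.fract, show cfX α 0 = α from rfl]
    push_cast
    ring
  | 1 => by
    have h0 : Int.fract (cfX α 0) ≠ 0 := (fract_cfX_pos hα 0).ne'
    have hx1 : cfX α 1 = (Int.fract (cfX α 0))⁻¹ := rfl
    have hf0 : Int.fract (cfX α 0) = α - (cfA α 0 : ℝ) := by
      rw [Int.fract]; rfl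
    have hf1 : Int.fract (cfX α 1) = cfX α 1 - (cfA α 1 : ℝ) := by
      rw [Int.fract]; rfl
    show ((cfA α 1 : ℤ) : ℝ) * α - ((cfA α 0 * cfA α 1 + 1 : ℤ) : ℝ) = (-1) ^ 1 * cfP α 1
    have hP : cfP α 1 = Int.fract (cfX α 0) * Int.fract (cfX α 1) := by
      rw [show (1:ℕ) = 0 + 1 from rfl, cfP_succ]; rw [cfP]; simp
    rw [hP, hf1, hx1]
    have hinv : Int.fract (cfX α 0) * (Int.fract (cfX α 0))⁻¹ = 1 := mul_inv_cancel₀ h0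
    push_cast
    linear_combination (-(cfA α 1 : ℝ)) * hf0 + hinv
  | (k + 2) => by
    have ih1 := beta_eq hα (k + 1)
    have ih0 := beta_eq hα k
    have h1 : Int.fract (cfX α (k + 1)) ≠ 0 := (fract_cfX_pos hα (k + 1)).ne'
    have hx2 : cfX α (k + 2) = (Int.fract (cfX α (k + 1)))⁻¹ := rfl
    have hf2 : Int.fract (cfX α (k + 2)) = cfX α (k + 2) - (cfA α (k + 2) : ℝ) := by
      rw [Int.fract]; rfl
    have hq : cfQ α (k + 2) = cfA α (k + 2) * cfQ α (k + 1) + cfQ α k := rfl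
    have hl : cfL α (k + 2) = cfA α (k + 2) * cfL α (k + 1) + cfL α k := rfl
    have hP2 : cfP α (k + 2) = cfP α (k + 1) * Int.fract (cfX α (k + 2)) := cfP_succ α (k + 1)
    have hP1 : cfP α (k + 1) = cfP α k * Int.fract (cfX α (k + 1)) := cfP_succ α k
    rw [hq, hl, hP2, hP1, hf2, hx2]
    have hs : ((-1:ℝ)) ^ (k + 2) = (-1) ^ k := by ring
    have hs1 : ((-1:ℝ)) ^ (k + 1) = -(-1) ^ k := by ring
    rw [hs]
    rw [hs1, hP1] at ih1
    have hinv1 : Int.fract (cfX α (k + 1)) * (Int.fract (cfX α (k + 1)))⁻¹ = 1 :=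
      mul_inv_cancel₀ h1
    push_cast
    linear_combination (cfA α (k+2) : ℝ) * ih1 + ih0 - ((-1:ℝ))^k * cfP α k * hinv1

lemma det_eq (α : ℝ) : ∀ k, cfL α (k + 1) * cfQ α k - cfL α k * cfQ α (k + 1) = (-1) ^ k
  | 0 => by
    show (cfA α 0 * cfA α 1 + 1) * 1 - cfA α 0 * cfA α 1 = 1
    ring
  | (k + 1) => by
    have ih := det_eq α k
    show (cfA α (k + 2) * cfL α (k + 1) + cfL α k) * cfQ α (k + 1)
        - cfL α (k + 1) * (cfA α (k + 2) * cfQ α (k + 1) + cfQ α k) = (-1) ^ (k + 1)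
    have : ((-1:ℤ)) ^ (k + 1) = -(-1) ^ k := by ring
    rw [this, ← ih]; ring

lemma qP_le_one {α : ℝ} (hα : Irrational α) (k : ℕ) : (cfQ α (k + 1) : ℝ) * cfP α k ≤ 1 := by
  have e1 := beta_eq hα k
  have e2 := beta_eq hα (k + 1)
  have e3 : ((cfL α (k + 1) : ℝ) * cfQ α k - cfL α k * cfQ α (k + 1)) = (-1) ^ k := by
    exact_mod_cast congrArg (Int.cast : ℤ → ℝ) (det_eq α k)
  have hs : ((-1:ℝ)) ^ (k + 1) = -(-1) ^ k := by ring
  rw [hs] at e2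
  have hs2 : ((-1:ℝ)) ^ k * (-1) ^ k = 1 := by
    rw [← pow_add]; exact Even.neg_one_pow ⟨k, by ring⟩
  have hqk : (1:ℝ) ≤ (cfQ α k : ℝ) := by exact_mod_cast cfQ_ge_one hα k
  have hPk1 : 0 < cfP α (k + 1) := cfP_pos hα (k + 1)
  have key : (cfQ α (k + 1) : ℝ) * cfP α k + (cfQ α k : ℝ) * cfP α (k + 1) = 1 := by
    linear_combination (-((-1:ℝ)^k) * (cfQ α (k+1) : ℝ)) * e1
      + (((-1:ℝ)^k) * (cfQ α k : ℝ)) * e2 + ((-1:ℝ)^k) * e3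
      + (-((cfQ α (k+1) : ℝ) * cfP α k) - (cfQ α k : ℝ) * cfP α (k+1) + 1) * hs2
  nlinarith [key, hqk, hPk1, mul_pos (lt_of_lt_of_le zero_lt_one hqk) hPk1]

lemma norm_one_sub_e_near (x : ℝ) (L : ℤ) : ‖1 - e x‖ ≤ 2 * Real.pi * |x - (L : ℝ)| := by
  have h : e x = e (x - (L:ℝ)) * e (L:ℝ) := by
    rw [← e_add]; congr 1; ring
  rw [h, e_int, mul_one]
  exact norm_one_sub_e _

lemma norm_one_sub_e_neg (x : ℝ) : ‖1 - e (-x)‖ = ‖1 - e x‖ := by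
  have h : e (-x) * e x = 1 := by rw [← e_add, neg_add_cancel, e_zero]
  have h2 : 1 - e (-x) = e (-x) * (e x - 1) := by rw [mul_sub, h, mul_one]
  rw [h2, norm_mul, e_norm, one_mul, norm_sub_rev]

lemma cfQ_cast_ge {α : ℝ} (hα : Irrational α)
    (hgrow : ∀ k : ℕ, 1 ≤ k → Real.exp (cfQ α k) ≤ (cfQ α (k + 1) : ℝ)) :
    ∀ k : ℕ, 1 ≤ k → (k : ℝ) ≤ (cfQ α k : ℝ) := by
  intro k
  induction k with
  | zero => intro h; omega
  | succ m ih =>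
    intro _
    rcases Nat.eq_zero_or_pos m with hm | hm
    · subst hm
      have := cfQ_ge_one hα 1
      push_cast
      exact_mod_cast this
    · have h1 := ih hm
      have h2 := hgrow m hm
      have h3 := Real.add_one_le_exp ((cfQ α m : ℝ))
      push_cast
      linarith

lemma cfP_le_exp {α : ℝ} (hα : Irrational α)
    (hgrow : ∀ k : ℕ, 1 ≤ k → Real.exp (cfQ α k) ≤ (cfQ α (k + 1) : ℝ))
    (k : ℕ) (hk : 1 ≤ k) : cfP α k ≤ Real.exp (-(k : ℝ)) := by
  have h1 := qP_le_one hα k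
  have h2 := hgrow k hk
  have h3 : 0 < Real.exp ((cfQ α k : ℝ)) := Real.exp_pos _
  have hP := cfP_pos hα k
  have h4 : Real.exp ((cfQ α k : ℝ)) * cfP α k ≤ 1 := by nlinarith
  have h5 : cfP α k ≤ Real.exp (-((cfQ α k : ℝ))) := by
    rw [Real.exp_neg, inv_eq_one_div, le_div_iff₀ h3]
    linarith
  refine h5.trans (Real.exp_le_exp.mpr ?_)
  have := cfQ_cast_ge hα hgrow k hk
  linarith

lemma bound_nat {α : ℝ} (hα : Irrational α)
    (hgrow : ∀ k : ℕ, 1 ≤ k → Real.exp (cfQ α k) ≤ (cfQ α (k + 1) : ℝ))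
    (m : ℕ) (hm : 1 ≤ m) (N : ℕ) :
    ‖1 - e ((N : ℝ) * (cfQ α m : ℝ) * α)‖ ≤ 2 * Real.pi * N * Real.exp (-(m : ℝ)) := by
  have h1 := norm_one_sub_e_near ((N : ℝ) * (cfQ α m : ℝ) * α) ((N : ℤ) * cfL α m)
  have h2 : (N : ℝ) * (cfQ α m : ℝ) * α - (((N : ℤ) * cfL α m : ℤ) : ℝ)
      = (N : ℝ) * ((cfQ α m : ℝ) * α - (cfL α m : ℝ)) := by push_cast; ring
  rw [h2, beta_eq hα m] at h1
  have h3 : |(N : ℝ) * ((-1) ^ m * cfP α m)| = (N : ℝ) * cfP α m := by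
    rw [abs_mul, abs_mul, abs_pow, abs_neg, abs_one, one_pow, one_mul,
      abs_of_nonneg (by positivity : (0:ℝ) ≤ (N:ℝ)),
      abs_of_nonneg (cfP_pos hα m).le]
  rw [h3] at h1
  refine h1.trans ?_
  have h4 := cfP_le_exp hα hgrow m hm
  have hπ : (0:ℝ) < 2 * Real.pi := by positivity
  have hN : (0:ℝ) ≤ (N:ℝ) := by positivity
  calc 2 * Real.pi * ((N:ℝ) * cfP α m) ≤ 2 * Real.pi * ((N:ℝ) * Real.exp (-(m:ℝ))) := by
        apply mul_le_mul_of_nonneg_left _ hπ.le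
        exact mul_le_mul_of_nonneg_left h4 hN
    _ = 2 * Real.pi * N * Real.exp (-(m:ℝ)) := by ring

lemma bound_main {α : ℝ} (hα : Irrational α)
    (hgrow : ∀ k : ℕ, 1 ≤ k → Real.exp (cfQ α k) ≤ (cfQ α (k + 1) : ℝ))
    (k : ℤ) (hk : k ≠ 0) (N : ℕ) :
    ‖1 - e ((N : ℝ) * (cfQZ α k : ℝ) * α)‖ ≤ 2 * Real.pi * N * Real.exp (-(k.natAbs : ℝ)) := by
  have hm : 1 ≤ k.natAbs := Int.natAbs_pos.mpr hk
  by_cases h : 0 ≤ k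
  · have hq : cfQZ α k = cfQ α k.natAbs := by
      rw [cfQZ, if_pos h]; congr 1; omega
    rw [hq]
    exact bound_nat hα hgrow _ hm N
  · have hq : cfQZ α k = -cfQ α k.natAbs := by
      rw [cfQZ, if_neg h]; congr 2; omega
    rw [hq]
    have harg : (N : ℝ) * ((-cfQ α k.natAbs : ℤ) : ℝ) * α
        = -((N : ℝ) * (cfQ α k.natAbs : ℝ) * α) := by push_cast; ring
    rw [harg, norm_one_sub_e_neg]
    exact bound_nat hα hgrow _ hm N

/-- the Birkhoff sums of `h(x) = ∑_{k ≠ 0} c_k (1 - e(q_k α)) e(q_k x)`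
along the orbit of `0` under `x ↦ x + α` telescope:
`∑_{j=0}^{n-1} h(jα) = ∑_{k ≠ 0} c_k (1 - e(n q_k α))`, all series converging absolutely. -/
theorem birkhoff_sum_telescopes (α : ℝ) (hα : Irrational α)
    (hgrow : ∀ k : ℕ, 1 ≤ k → Real.exp (cfQ α k) ≤ (cfQ α (k + 1) : ℝ))
    (C : ℝ) (hC : 1 ≤ C) (c : ℤ → ℝ)
    (hc : ∀ k : ℤ, k ≠ 0 → c (-k) = c k ∧ |c k| ≤ C) :
    (∀ x : ℝ, Summable (fun k : ℤ => ‖if k = 0 then (0 : ℂ) else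
        (c k : ℂ) * (1 - e ((cfQZ α k : ℝ) * α)) * e ((cfQZ α k : ℝ) * x)‖)) ∧
    ∀ n : ℕ, 1 ≤ n →
      Summable (fun k : ℤ => ‖if k = 0 then (0 : ℂ) else
          (c k : ℂ) * (1 - e ((n : ℝ) * (cfQZ α k : ℝ) * α))‖) ∧
      ∑ j ∈ Finset.range n,
          (∑' k : ℤ, if k = 0 then (0 : ℂ) else
            (c k : ℂ) * (1 - e ((cfQZ α k : ℝ) * α)) * e ((cfQZ α k : ℝ) * (j * α)))
        = ∑' k : ℤ, if k = 0 then (0 : ℂ) else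
            (c k : ℂ) * (1 - e ((n : ℝ) * (cfQZ α k : ℝ) * α)) := by
  have hCpos : (0:ℝ) < C := lt_of_lt_of_le zero_lt_one hC
  have hexp : Summable (fun k : ℤ => Real.exp (-(k.natAbs : ℝ))) := by
    have hnat : Summable (fun n : ℕ => Real.exp (-(n : ℝ))) := by
      have heq : (fun n : ℕ => Real.exp (-(n : ℝ))) = fun n : ℕ => (Real.exp (-1)) ^ n := by
        funext n; rw [← Real.exp_nat_mul]; ring_nf
      rw [heq]
      exact summable_geometric_of_lt_one (Real.exp_nonneg _)
        (Real.exp_lt_one_iff.mpr (by norm_num))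
    apply Summable.of_nat_of_neg
    · simpa using hnat
    · simpa using hnat
  have hbnd : ∀ (k : ℤ), k ≠ 0 → ∀ N : ℕ,
      ‖1 - e ((N : ℝ) * (cfQZ α k : ℝ) * α)‖ ≤ 2 * Real.pi * N * Real.exp (-(k.natAbs : ℝ)) :=
    fun k hk N => bound_main hα hgrow k hk N
  have hbnd1 : ∀ (k : ℤ), k ≠ 0 →
      ‖1 - e ((cfQZ α k : ℝ) * α)‖ ≤ 2 * Real.pi * Real.exp (-(k.natAbs : ℝ)) := by
    intro k hk
    have h := hbnd k hk 1
    rw [Nat.cast_one, one_mul, mul_one] at h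
    exact h
  have hsum1 : ∀ x : ℝ, Summable (fun k : ℤ => ‖if k = 0 then (0 : ℂ) else
      (c k : ℂ) * (1 - e ((cfQZ α k : ℝ) * α)) * e ((cfQZ α k : ℝ) * x)‖) := by
    intro x
    apply Summable.of_nonneg_of_le (fun k => norm_nonneg _) _
      (hexp.mul_left (C * (2 * Real.pi)))
    intro k
    by_cases hk : k = 0
    · rw [if_pos hk, norm_zero]
      positivity
    · rw [if_neg hk, norm_mul, norm_mul, e_norm, mul_one, Complex.norm_real,
        Real.norm_eq_abs]
      calc |c k| * ‖1 - e ((cfQZ α k : ℝ) * α)‖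
          ≤ C * (2 * Real.pi * Real.exp (-(k.natAbs : ℝ))) :=
            mul_le_mul (hc k hk).2 (hbnd1 k hk) (norm_nonneg _) hCpos.le
        _ = C * (2 * Real.pi) * Real.exp (-(k.natAbs : ℝ)) := by ring
  refine ⟨hsum1, ?_⟩
  intro n hn
  have hsum2 : Summable (fun k : ℤ => ‖if k = 0 then (0 : ℂ) else
      (c k : ℂ) * (1 - e ((n : ℝ) * (cfQZ α k : ℝ) * α))‖) := by
    apply Summable.of_nonneg_of_le (fun k => norm_nonneg _) _
      (hexp.mul_left (C * (2 * Real.pi * n)))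
    intro k
    by_cases hk : k = 0
    · rw [if_pos hk, norm_zero]
      positivity
    · rw [if_neg hk, norm_mul, Complex.norm_real, Real.norm_eq_abs]
      calc |c k| * ‖1 - e ((n : ℝ) * (cfQZ α k : ℝ) * α)‖
          ≤ C * (2 * Real.pi * n * Real.exp (-(k.natAbs : ℝ))) :=
            mul_le_mul (hc k hk).2 (hbnd k hk n) (norm_nonneg _) hCpos.le
        _ = C * (2 * Real.pi * n) * Real.exp (-(k.natAbs : ℝ)) := by ring
  refine ⟨hsum2, ?_⟩
  have hsummf : ∀ x : ℝ, Summable (fun k : ℤ => if k = 0 then (0 : ℂ) else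
      (c k : ℂ) * (1 - e ((cfQZ α k : ℝ) * α)) * e ((cfQZ α k : ℝ) * x)) :=
    fun x => (hsum1 x).of_norm
  have step1 : (∑ j ∈ Finset.range n, ∑' k : ℤ, (if k = 0 then (0 : ℂ) else
        (c k : ℂ) * (1 - e ((cfQZ α k : ℝ) * α)) * e ((cfQZ α k : ℝ) * ((j : ℝ) * α))))
      = ∑' k : ℤ, ∑ j ∈ Finset.range n, (if k = 0 then (0 : ℂ) else
        (c k : ℂ) * (1 - e ((cfQZ α k : ℝ) * α)) * e ((cfQZ α k : ℝ) * ((j : ℝ) * α))) :=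
    (Summable.tsum_finsetSum (s := Finset.range n)
      (f := fun (j : ℕ) (k : ℤ) => if k = 0 then (0 : ℂ) else
        (c k : ℂ) * (1 - e ((cfQZ α k : ℝ) * α)) * e ((cfQZ α k : ℝ) * ((j : ℝ) * α)))
      (fun j _ => hsummf ((j : ℝ) * α))).symm
  rw [step1]
  apply tsum_congr
  intro k
  by_cases hk : k = 0
  · simp [hk]
  · simp only [if_neg hk]
    have hj : ∀ j : ℕ, e ((cfQZ α k : ℝ) * ((j : ℝ) * α)) = (e ((cfQZ α k : ℝ) * α)) ^ j := by
      intro j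
      rw [← e_pow]
      congr 1
      ring
    have hrn : e ((n : ℝ) * (cfQZ α k : ℝ) * α) = (e ((cfQZ α k : ℝ) * α)) ^ n := by
      rw [← e_pow]
      congr 1
      ring
    calc ∑ j ∈ Finset.range n,
          (c k : ℂ) * (1 - e ((cfQZ α k : ℝ) * α)) * e ((cfQZ α k : ℝ) * ((j : ℝ) * α))
        = ∑ j ∈ Finset.range n,
            (c k : ℂ) * (1 - e ((cfQZ α k : ℝ) * α)) * (e ((cfQZ α k : ℝ) * α)) ^ j :=
          Finset.sum_congr rfl fun j _ => by rw [hj j]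
      _ = (c k : ℂ) * (1 - e ((cfQZ α k : ℝ) * α)) *
            ∑ j ∈ Finset.range n, (e ((cfQZ α k : ℝ) * α)) ^ j := by
          rw [Finset.mul_sum]
      _ = (c k : ℂ) * (1 - (e ((cfQZ α k : ℝ) * α)) ^ n) := by
          linear_combination (-(c k : ℂ)) * geom_sum_mul (e ((cfQZ α k : ℝ) * α)) n
      _ = (c k : ℂ) * (1 - e ((n : ℝ) * (cfQZ α k : ℝ) * α)) := by rw [hrn]
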